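/- Let M ∈ ℝ^{n×n} be a real square matrix, τ ∈ ℝ, and let Q ∈ ℝ^{n×n} be symmetric positive definite such that M Q + Q Mᵀ + 2τ Q is positive definite. Then every eigenvalue μ ∈ ℂ of M (i.e., every eigenvalue of the complexification of M, equivalently every root of the characteristic polynomial of M over ℂ) satisfies Re μ > −τ. -/

import Mathlib

open Matrix

lemma re_dot_pos_of_posDef {n : ℕ} {S : Matrix (Fin n) (Fin n) ℝ} (hS : S.PosDef)
    (v : Fin n → ℂ) (hv : v ≠ 0) :
    0 < (star v ⬝ᵥ ((S.map Complex.ofReal) *ᵥ v)).re := by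
  set a : Fin n → ℝ := fun i => (v i).re with ha
  set b : Fin n → ℝ := fun i => (v i).im with hb
  have key : (star v ⬝ᵥ ((S.map Complex.ofReal) *ᵥ v)).re
      = a ⬝ᵥ (S *ᵥ a) + b ⬝ᵥ (S *ᵥ b) := by
    simp only [dotProduct, mulVec, Pi.star_apply, Matrix.map_apply, Finset.mul_sum,
      Complex.re_sum, ← Finset.sum_add_distrib]
    refine Finset.sum_congr rfl fun i _ => ?_
    refine Finset.sum_congr rfl fun j _ => ?_
    simp only [Complex.star_def, Complex.mul_re, Complex.mul_im, Complex.conj_re,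
      Complex.conj_im, Complex.ofReal_re, Complex.ofReal_im, ha, hb]
    ring
  rw [key]
  have hab : a ≠ 0 ∨ b ≠ 0 := by
    by_contra h
    push_neg at h
    apply hv
    funext i
    have h1 := congrFun h.1 i
    have h2 := congrFun h.2 i
    simp only [ha, hb, Pi.zero_apply] at h1 h2
    exact Complex.ext h1 h2
  have hsa : 0 ≤ a ⬝ᵥ (S *ᵥ a) := by
    have := hS.posSemidef.dotProduct_mulVec_nonneg a; simpa using this
  have hsb : 0 ≤ b ⬝ᵥ (S *ᵥ b) := by
    have := hS.posSemidef.dotProduct_mulVec_nonneg b; simpa using this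
  rcases hab with h | h
  · have := hS.dotProduct_mulVec_pos h; simp only [star_trivial] at this; linarith
  · have := hS.dotProduct_mulVec_pos h; simp only [star_trivial] at this; linarith

theorem lyapunov_pole_right_of_line
    (n : ℕ) (M : Matrix (Fin n) (Fin n) ℝ) (τ : ℝ)
    (Q : Matrix (Fin n) (Fin n) ℝ) (hQ : Q.PosDef)
    (hLMI : (M * Q + Q * Mᵀ + (2 * τ) • Q).PosDef) :
    ∀ μ : ℂ, μ ∈ spectrum ℂ (M.map (Complex.ofReal)) → -τ < μ.re := by
  intro μ hμ
  set A : Matrix (Fin n) (Fin n) ℂ := M.map Complex.ofReal with hA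
  -- `star μ` is in the spectrum of `Aᴴ`
  have hstar : (starRingEnd ℂ) μ ∈ spectrum ℂ Aᴴ := by
    rw [spectrum.mem_iff] at hμ ⊢
    intro hUnit
    exact hμ (by simpa [star_sub, ← Matrix.star_eq_conjTranspose,
      ← algebraMap_star_comm] using hUnit.star)
  -- extract an eigenvector for `Aᴴ`
  rw [← AlgEquiv.spectrum_eq (Matrix.toLinAlgEquiv' (R := ℂ) (n := Fin n)),
    ← Module.End.hasEigenvalue_iff_mem_spectrum] at hstar
  obtain ⟨v, hv⟩ := hstar.exists_hasEigenvector
  have hv_ne : v ≠ 0 := hv.right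
  have hv_eq : Aᴴ *ᵥ v = (starRingEnd ℂ) μ • v := by
    have := hv.apply_eq_smul
    simpa [Matrix.toLinAlgEquiv'_apply, Matrix.toLin'_apply] using this
  have hQpos := re_dot_pos_of_posDef hQ v hv_ne
  have hLpos := re_dot_pos_of_posDef hLMI v hv_ne
  set Qc : Matrix (Fin n) (Fin n) ℂ := Q.map Complex.ofReal with hQc
  have hAH : Aᴴ = Mᵀ.map Complex.ofReal := by
    ext i j
    simp [hA, conjTranspose_apply, Complex.star_def, Complex.conj_ofReal]
  have hmap : (M * Q + Q * Mᵀ + (2 * τ) • Q).map Complex.ofReal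
      = A * Qc + Qc * Aᴴ + ((2 * τ : ℝ) : ℂ) • Qc := by
    rw [hAH]
    ext i j
    simp only [Matrix.map_apply, Matrix.add_apply, Matrix.smul_apply, Matrix.mul_apply,
      hA, hQc, smul_eq_mul]
    push_cast
    ring
  set c : ℂ := star v ⬝ᵥ (Qc *ᵥ v) with hc
  have hrow : star v ᵥ* A = μ • star v := by
    have := congrArg star hv_eq
    rw [star_mulVec, conjTranspose_conjTranspose, star_smul] at this
    simpa using this
  have h1 : star v ⬝ᵥ ((A * Qc) *ᵥ v) = μ * c := by
    rw [← mulVec_mulVec, dotProduct_mulVec, hrow, smul_dotProduct]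
    simp [hc, smul_eq_mul]
  have h2 : star v ⬝ᵥ ((Qc * Aᴴ) *ᵥ v) = (starRingEnd ℂ) μ * c := by
    rw [← mulVec_mulVec, hv_eq, mulVec_smul, dotProduct_smul]
    simp [hc, smul_eq_mul]
  have h3 : star v ⬝ᵥ ((((2 * τ : ℝ) : ℂ) • Qc) *ᵥ v) = ((2 * τ : ℝ) : ℂ) * c := by
    rw [smul_mulVec, dotProduct_smul]
    simp [hc, smul_eq_mul]
  have htot : star v ⬝ᵥ (((M * Q + Q * Mᵀ + (2 * τ) • Q).map Complex.ofReal) *ᵥ v)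
      = (μ + (starRingEnd ℂ) μ + ((2 * τ : ℝ) : ℂ)) * c := by
    rw [hmap, add_mulVec, add_mulVec, dotProduct_add, dotProduct_add, h1, h2, h3]
    ring
  rw [htot] at hLpos
  have hco : μ + (starRingEnd ℂ) μ + ((2 * τ : ℝ) : ℂ) = ((2 * μ.re + 2 * τ : ℝ) : ℂ) := by
    rw [Complex.add_conj]
    push_cast
    ring
  rw [hco] at hLpos
  rw [Complex.re_ofReal_mul] at hLpos
  nlinarith [hQpos, hLpos]
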